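/- Let X ⊆ D^k be a finite symmetric set (closed under permutation of coordinates) and f : X → ℂ a symmetric function. Then the sum of f over the pairwise-distinct-coordinate subset X̄ equals ∑_{[τ] ∈ C_k} sign(τ) · C(τ) · F_τ, where the sum ranges over conjugacy classes C_k of S_k, C(τ) is the size of the conjugacy class of τ, and F_τ = ∑_{x ∈ X_τ} f(x) for a fixed representative τ. -/

import Mathlib

open Finset

open scoped Classical

lemma sign_sum_eq {D : Type*} {k : ℕ} (x : Fin k → D) :
    ∑ σ ∈ univ.filter (fun σ : Equiv.Perm (Fin k) => ∀ i, x (σ i) = x i),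
      ((Equiv.Perm.sign σ : ℤ) : ℂ) = if Function.Injective x then 1 else 0 := by
  by_cases hx : Function.Injective x
  · rw [if_pos hx]
    have h1 : univ.filter (fun σ : Equiv.Perm (Fin k) => ∀ i, x (σ i) = x i) = {1} := by
      ext σ
      simp only [mem_filter, mem_univ, true_and, mem_singleton]
      constructor
      · intro h; ext i; rw [hx (h i)]; rfl
      · rintro rfl i; rfl
    simp [h1]
  · rw [if_neg hx]
    rw [Function.not_injective_iff] at hx
    obtain ⟨i, j, hxij, hij⟩ := hx
    refine Finset.sum_involution (fun σ _ => σ * Equiv.swap i j) ?_ ?_ ?_ ?_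
    · intro σ hσ
      have : ((Equiv.Perm.sign (σ * Equiv.swap i j) : ℤ) : ℂ)
          = -((Equiv.Perm.sign σ : ℤ) : ℂ) := by
        simp [Equiv.Perm.sign_swap hij]
      rw [this]; ring
    · intro σ _ _ h
      have h1 : Equiv.swap i j = 1 := mul_left_cancel (a := σ) (h.trans (mul_one σ).symm)
      exact hij (Equiv.swap_eq_one_iff.mp h1)
    · intro σ hσ
      simp only [mem_filter, mem_univ, true_and] at hσ ⊢
      intro m
      have hs : x (Equiv.swap i j m) = x m := by
        rcases Equiv.swap_apply_def i j m with _
        by_cases hm : m = i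
        · subst hm; rw [Equiv.swap_apply_left]; exact hxij.symm
        by_cases hm' : m = j
        · subst hm'; rw [Equiv.swap_apply_right]; exact hxij
        · rw [Equiv.swap_apply_of_ne_of_ne hm hm']
      rw [Equiv.Perm.mul_apply, hσ, hs]
    · intro σ _
      rw [mul_assoc, Equiv.swap_mul_self, mul_one]

lemma conj_sum_eq {D : Type*} {k : ℕ} (X : Finset (Fin k → D)) (f : (Fin k → D) → ℂ)
    (hX : ∀ (τ : Equiv.Perm (Fin k)) (x : Fin k → D), x ∈ X → x ∘ τ ∈ X)
    (hf : ∀ (τ : Equiv.Perm (Fin k)) (x : Fin k → D), f (x ∘ τ) = f x)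
    (τ π : Equiv.Perm (Fin k)) :
    ∑ x ∈ X.filter (fun x => ∀ i, x ((π * τ * π⁻¹) i) = x i), f x
      = ∑ x ∈ X.filter (fun x => ∀ i, x (τ i) = x i), f x := by
  refine Finset.sum_nbij' (fun x => x ∘ π) (fun x => x ∘ ⇑π⁻¹) ?_ ?_ ?_ ?_ ?_
  · intro x hx
    simp only [mem_filter] at hx ⊢
    refine ⟨hX π x hx.1, fun i => ?_⟩
    have := hx.2 (π i)
    simpa [Equiv.Perm.mul_apply] using this
  · intro y hy
    simp only [mem_filter] at hy ⊢
    refine ⟨hX π⁻¹ y hy.1, fun i => ?_⟩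
    have := hy.2 (π⁻¹ i)
    simpa [Equiv.Perm.mul_apply] using this
  · intro x _; ext m; simp
  · intro y _; ext m; simp
  · intro x _; exact (hf π x).symm

set_option maxHeartbeats 800000 in
open scoped Classical in
/-- Symmetric version of the Li–Wan sieving formula: if `X ⊆ D^k` is closed under
permutation of coordinates and `f` is a symmetric function, then the sum of `f` over the
pairwise-distinct-coordinate subset of `X` equals `∑_{[τ] ∈ C_k} sign(τ) C(τ) F_τ`, where
the sum is over a set `R` of representatives of the conjugacy classes of `S_k`, `C(τ)` is
the size of the conjugacy class of `τ`, and `F_τ` is the sum of `f` over the tuples of `X`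
constant on each cycle of `τ`. -/
theorem stmt2 {D : Type*} (k : ℕ) (X : Finset (Fin k → D)) (f : (Fin k → D) → ℂ)
    (hX : ∀ (τ : Equiv.Perm (Fin k)) (x : Fin k → D), x ∈ X → x ∘ τ ∈ X)
    (hf : ∀ (τ : Equiv.Perm (Fin k)) (x : Fin k → D), f (x ∘ τ) = f x)
    (R : Finset (Equiv.Perm (Fin k)))
    (hR : ∀ σ : Equiv.Perm (Fin k), ∃! τ, τ ∈ R ∧ IsConj σ τ) :
    ∑ x ∈ X.filter (fun x => Function.Injective x), f x =
      ∑ τ ∈ R, ((Equiv.Perm.sign τ : ℤ) : ℂ) *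
        ((Finset.univ.filter fun σ : Equiv.Perm (Fin k) => IsConj τ σ).card : ℂ) *
        ∑ x ∈ X.filter (fun x => ∀ i, x (τ i) = x i), f x := by
  set G : Equiv.Perm (Fin k) → ℂ := fun σ =>
    ((Equiv.Perm.sign σ : ℤ) : ℂ) * ∑ x ∈ X.filter (fun x => ∀ i, x (σ i) = x i), f x with hG
  -- Step 1: LHS = sum over all permutations
  have step1 : ∑ x ∈ X.filter (fun x => Function.Injective x), f x
      = ∑ σ : Equiv.Perm (Fin k), G σ := by
    have : ∑ σ : Equiv.Perm (Fin k), G σ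
        = ∑ σ : Equiv.Perm (Fin k), ∑ x ∈ X.filter (fun x => ∀ i, x (σ i) = x i),
            ((Equiv.Perm.sign σ : ℤ) : ℂ) * f x := by
      simp [hG, Finset.mul_sum]
    rw [this]
    rw [Finset.sum_comm' (t' := X) (s' := fun x =>
        univ.filter (fun σ : Equiv.Perm (Fin k) => ∀ i, x (σ i) = x i))]
    · rw [Finset.sum_filter]
      refine Finset.sum_congr rfl fun x hx => ?_
      rw [← Finset.sum_mul, sign_sum_eq]
      by_cases h : Function.Injective x <;> simp [h]
    · intro σ x
      simp only [mem_filter, mem_univ, true_and]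
      tauto
  rw [step1]
  -- Step 2: group by conjugacy class
  choose rep hrep using hR
  have hmaps : ∀ σ ∈ (univ : Finset (Equiv.Perm (Fin k))), rep σ ∈ R :=
    fun σ _ => (hrep σ).1.1
  rw [← Finset.sum_fiberwise_of_maps_to hmaps G]
  refine Finset.sum_congr rfl fun τ hτ => ?_
  have hfilt : (univ : Finset (Equiv.Perm (Fin k))).filter (fun σ => rep σ = τ)
      = univ.filter (fun σ => IsConj τ σ) := by
    ext σ
    simp only [mem_filter, mem_univ, true_and]
    constructor
    · rintro rfl; exact ((hrep σ).1.2).symm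
    · intro h; exact ((hrep σ).2 τ ⟨hτ, h.symm⟩).symm
  rw [hfilt]
  have hconst : ∀ σ ∈ univ.filter (fun σ => IsConj τ σ), G σ = G τ := by
    intro σ hσ
    simp only [mem_filter, mem_univ, true_and] at hσ
    obtain ⟨π, hπ⟩ := isConj_iff.mp hσ
    subst hπ
    simp only [hG]
    rw [conj_sum_eq X f hX hf τ π]
    have hs : Equiv.Perm.sign (π * τ * π⁻¹) = Equiv.Perm.sign τ := by
      rw [map_mul, map_mul, map_inv, mul_comm (Equiv.Perm.sign π), mul_inv_cancel_right]
    rw [hs]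
  rw [Finset.sum_congr rfl hconst, Finset.sum_const, nsmul_eq_mul]
  simp only [hG]
  ring
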